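/- Zhang–Shasha recurrence: for nonempty forests F1, F2 with rightmost roots r_{F1}, r_{F2}, ed(F1, F2) = min( ed(F1 - r_{F1}, F2) + 1, ed(F1, F2 - r_{F2}) + 1, ed(R°_{F1}, R°_{F2}) + ed(L'_{F1}, L'_{F2}) + δ(r_{F1}, r_{F2}) ), and ed(F, ∅) = |F|. -/

import Mathlib

/-- Ordered rooted trees with node labels from `α`. -/
inductive Tree' (α : Type) : Type
  | node (label : α) (children : List (Tree' α))

/-- An ordered forest is an ordered list of trees. -/
abbrev Forest (α : Type) := List (Tree' α)

mutual
/-- Number of nodes of a tree. -/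
def Tree'.size {α : Type} : Tree' α → ℕ
  | .node _ cs => 1 + Forest.size cs
/-- Number of nodes of a forest. -/
def Forest.size {α : Type} : Forest α → ℕ
  | [] => 0
  | t :: ts => Tree'.size t + Forest.size ts
end

/-- A single edit operation on a forest: delete a node (promoting its children, in
order, to its parent) or relabel a node. -/
inductive EditStep {α : Type} : Forest α → Forest α → Prop
  | delete (pre : Forest α) (a : α) (cs post : Forest α) :
      EditStep (pre ++ Tree'.node a cs :: post) (pre ++ cs ++ post)
  | relabel (pre : Forest α) (a b : α) (cs post : Forest α) :
      EditStep (pre ++ Tree'.node a cs :: post) (pre ++ Tree'.node b cs :: post)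
  | inside (pre : Forest α) (a : α) {cs cs' : Forest α} (post : Forest α) :
      EditStep cs cs' →
      EditStep (pre ++ Tree'.node a cs :: post) (pre ++ Tree'.node a cs' :: post)

/-- `EditSteps n F G`: `G` is obtained from `F` by exactly `n` edit operations. -/
inductive EditSteps {α : Type} : ℕ → Forest α → Forest α → Prop
  | refl (F : Forest α) : EditSteps 0 F F
  | tail {n : ℕ} {F G H : Forest α} : EditSteps n F G → EditStep G H → EditSteps (n + 1) F H

/-- The (unweighted) tree edit distance: the minimum total number of relabelings
and deletions applied to `F1` and `F2` so that they become identical. -/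
noncomputable def ed {α : Type} (F1 F2 : Forest α) : ℕ :=
  sInf {k | ∃ (k1 k2 : ℕ) (G : Forest α), k = k1 + k2 ∧ EditSteps k1 F1 G ∧ EditSteps k2 F2 G}

/-- The similarity between two forests. -/
noncomputable def sim {α : Type} (F1 F2 : Forest α) : ℤ :=
  (Forest.size F1 : ℤ) + Forest.size F2 - ed F1 F2

namespace ZS
variable {α : Type}

@[simp] lemma size_nil : Forest.size ([] : Forest α) = 0 := rfl
@[simp] lemma size_cons (t : Tree' α) (ts : Forest α) :
    Forest.size (t :: ts) = t.size + ts.size := rfl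
@[simp] lemma size_node (a : α) (cs : Forest α) :
    (Tree'.node a cs).size = 1 + cs.size := rfl

@[simp] lemma size_append : ∀ X Y : Forest α, (X ++ Y).size = X.size + Y.size
  | [], Y => by simp
  | t :: X, Y => by simp [size_append X Y]; omega

@[simp] lemma size_reverse : ∀ X : Forest α, Forest.size (X.reverse) = Forest.size X
  | [] => rfl
  | t :: X => by
      rw [List.reverse_cons, size_append, size_reverse X]; simp; omega

def Eaux [DecidableEq α] : Forest α → Forest α → ℕ
  | [], G => G.size
  | F, [] => F.size
  | .node a cs :: X, .node b ds :: Y =>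
      min (min (Eaux (cs.reverse ++ X) (.node b ds :: Y) + 1)
               (Eaux (.node a cs :: X) (ds.reverse ++ Y) + 1))
          (Eaux cs.reverse ds.reverse + Eaux X Y + (if a = b then 0 else 1))
termination_by F G => F.size + G.size
decreasing_by all_goals { simp only [List.unattach_reverse, List.unattach_attach, size_append, size_reverse, size_cons, size_node, size_nil]; omega }

def D [DecidableEq α] (F G : Forest α) : ℕ := Eaux F.reverse G.reverse

lemma D_nil_left [DecidableEq α] (G : Forest α) : D [] G = G.size := by
  simp only [D, List.reverse_nil]
  rw [show Eaux ([] : Forest α) G.reverse = Forest.size G.reverse from by simp [Eaux]]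
  exact size_reverse G

lemma D_nil_right [DecidableEq α] (F : Forest α) : D F [] = F.size := by
  have h : Forest.size F.reverse = Forest.size F := size_reverse F
  cases hF : F.reverse with
  | nil =>
      have : F = [] := by simpa using congrArg List.reverse hF
      subst this; simp [D, Eaux]
  | cons t X =>
      rw [hF] at h
      simp only [D, hF, List.reverse_nil]
      rw [show Eaux (t :: X) ([] : Forest α) = Forest.size (t :: X) from by simp [Eaux], h]

lemma D_rec [DecidableEq α] (ts1 ts2 cs ds : Forest α) (a b : α) :
    D (ts1 ++ [.node a cs]) (ts2 ++ [.node b ds]) =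
      min (min (D (ts1 ++ cs) (ts2 ++ [.node b ds]) + 1)
               (D (ts1 ++ [.node a cs]) (ts2 ++ ds) + 1))
          (D cs ds + D ts1 ts2 + (if a = b then 0 else 1)) := by
  simp only [D, List.reverse_append, List.reverse_cons, List.reverse_nil, List.nil_append,
    List.cons_append, List.append_nil]
  rw [show ∀ (X Y : Forest α), Eaux (Tree'.node a cs :: X) (Tree'.node b ds :: Y) =
      min (min (Eaux (cs.reverse ++ X) (.node b ds :: Y) + 1)
               (Eaux (.node a cs :: X) (ds.reverse ++ Y) + 1))
          (Eaux cs.reverse ds.reverse + Eaux X Y + (if a = b then 0 else 1)) from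
    fun X Y => by rw [Eaux]]


lemma step_context {X Y : Forest α} (P Q : Forest α) (h : EditStep X Y) :
    EditStep (P ++ X ++ Q) (P ++ Y ++ Q) := by
  cases h with
  | delete pre a cs post =>
      have := EditStep.delete (P ++ pre) a cs (post ++ Q)
      simpa [List.append_assoc] using this
  | relabel pre a b cs post =>
      have := EditStep.relabel (P ++ pre) a b cs (post ++ Q)
      simpa [List.append_assoc] using this
  | inside pre a post h =>
      have := EditStep.inside (P ++ pre) a (post ++ Q) h
      simpa [List.append_assoc] using this

lemma step_size {F F' : Forest α} (h : EditStep F F') :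
    Forest.size F' ≤ Forest.size F ∧ Forest.size F ≤ Forest.size F' + 1 := by
  induction h with
  | delete pre a cs post =>
      constructor <;> (simp only [size_append, size_cons, size_node, size_nil]; omega)
  | relabel pre a b cs post =>
      constructor <;> (simp only [size_append, size_cons, size_node, size_nil]; omega)
  | inside pre a post h ih =>
      obtain ⟨h1, h2⟩ := ih
      constructor <;> (simp only [size_append, size_cons, size_node, size_nil]; omega)

lemma steps_head {G H : Forest α} {n : ℕ} (hs : EditSteps n G H) :
    ∀ {F : Forest α}, EditStep F G → EditSteps (n + 1) F H := by
  induction hs with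
  | refl G => exact fun h => .tail (.refl _) h
  | tail hs st ih => exact fun h => .tail (ih h) st

lemma steps_trans {n : ℕ} {G H : Forest α} (h2 : EditSteps n G H) :
    ∀ {m : ℕ} {F : Forest α}, EditSteps m F G → EditSteps (m + n) F H := by
  induction h2 with
  | refl => exact fun h1 => h1
  | tail hs st ih => exact fun h1 => .tail (ih h1) st

lemma steps_context {n : ℕ} {X Y : Forest α} (P Q : Forest α) (h : EditSteps n X Y) :
    EditSteps n (P ++ X ++ Q) (P ++ Y ++ Q) := by
  induction h with
  | refl => exact .refl _
  | tail hs st ih => exact .tail ih (step_context P Q st)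

lemma steps_inside {n : ℕ} {cs cs' : Forest α} (P Q : Forest α) (a : α)
    (h : EditSteps n cs cs') :
    EditSteps n (P ++ Tree'.node a cs :: Q) (P ++ Tree'.node a cs' :: Q) := by
  induction h with
  | refl => exact .refl _
  | tail hs st ih => exact .tail ih (EditStep.inside P a Q st)

lemma steps_append {m n : ℕ} {X X' Y Y' : Forest α} (h1 : EditSteps m X X')
    (h2 : EditSteps n Y Y') : EditSteps (m + n) (X ++ Y) (X' ++ Y') := by
  have t1 : EditSteps m (X ++ Y) (X' ++ Y) := by simpa using steps_context [] Y h1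
  have t2 : EditSteps n (X' ++ Y) (X' ++ Y') := by simpa using steps_context X' [] h2
  exact steps_trans t2 t1

lemma deleteAll (F : Forest α) : EditSteps (Forest.size F) F [] := by
  match F with
  | [] => exact .refl []
  | .node a cs :: ts =>
      have step : EditStep (.node a cs :: ts) (cs ++ ts) := by
        simpa using EditStep.delete [] a cs ts
      have ih := deleteAll (cs ++ ts)
      have h := steps_head ih step
      have : Forest.size (.node a cs :: ts) = Forest.size (cs ++ ts) + 1 := by simp; omega
      rw [this]
      exact h
termination_by Forest.size F
decreasing_by simp only [size_append, size_cons, size_node]; omega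

lemma steps_size {n : ℕ} {F G : Forest α} (h : EditSteps n F G) :
    Forest.size F ≤ Forest.size G + n := by
  induction h with
  | refl => simp
  | tail hs st ih => have := step_size st; omega

lemma step_src_ne_nil {F F' : Forest α} (h : EditStep F F') : F ≠ [] := by
  cases h <;> simp

lemma ed_le {F G G' : Forest α} {k1 k2 : ℕ} (h1 : EditSteps k1 F G')
    (h2 : EditSteps k2 G G') : ed F G ≤ k1 + k2 :=
  Nat.sInf_le ⟨k1, k2, G', rfl, h1, h2⟩

lemma ed_spec (F G : Forest α) :
    ∃ k1 k2 G', ed F G = k1 + k2 ∧ EditSteps k1 F G' ∧ EditSteps k2 G G' := by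
  have hne : {k | ∃ (k1 k2 : ℕ) (G' : Forest α),
      k = k1 + k2 ∧ EditSteps k1 F G' ∧ EditSteps k2 G G'}.Nonempty :=
    ⟨Forest.size F + Forest.size G, Forest.size F, Forest.size G, [], rfl,
      deleteAll F, deleteAll G⟩
  exact Nat.sInf_mem hne

lemma ed_symm (F G : Forest α) : ed F G = ed G F := by
  have h1 : ∀ X Y : Forest α, ed X Y ≤ ed Y X := by
    intro X Y
    obtain ⟨k1, k2, G', hk, hx, hy⟩ := ed_spec Y X
    have := ed_le hy hx
    omega
  exact le_antisymm (h1 F G) (h1 G F)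

lemma ed_step_left {F F' G : Forest α} (h : EditStep F F') : ed F G ≤ ed F' G + 1 := by
  obtain ⟨k1, k2, G', hk, h1, h2⟩ := ed_spec F' G
  have hs : EditSteps (k1 + 1) F G' := steps_head h1 h
  have := ed_le hs h2
  omega

lemma ed_compose [DecidableEq α] (ts1 ts2 cs1 cs2 : Forest α) (a1 a2 : α) :
    ed (ts1 ++ [Tree'.node a1 cs1]) (ts2 ++ [Tree'.node a2 cs2]) ≤
      ed cs1 cs2 + ed ts1 ts2 + (if a1 = a2 then 0 else 1) := by
  obtain ⟨c1, c2, Gc, hc, hc1, hc2⟩ := ed_spec cs1 cs2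
  obtain ⟨t1, t2, Gt, ht, ht1, ht2⟩ := ed_spec ts1 ts2
  have l1 : EditSteps (t1 + c1) (ts1 ++ [Tree'.node a1 cs1]) (Gt ++ [Tree'.node a1 Gc]) := by
    have s1 : EditSteps t1 (ts1 ++ [Tree'.node a1 cs1]) (Gt ++ [Tree'.node a1 cs1]) :=
      steps_append ht1 (.refl _)
    have s2 : EditSteps c1 (Gt ++ [Tree'.node a1 cs1]) (Gt ++ [Tree'.node a1 Gc]) :=
      steps_inside Gt [] a1 hc1
    exact steps_trans s2 s1
  have r1 : EditSteps (t2 + c2) (ts2 ++ [Tree'.node a2 cs2]) (Gt ++ [Tree'.node a2 Gc]) := by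
    have s1 : EditSteps t2 (ts2 ++ [Tree'.node a2 cs2]) (Gt ++ [Tree'.node a2 cs2]) :=
      steps_append ht2 (.refl _)
    have s2 : EditSteps c2 (Gt ++ [Tree'.node a2 cs2]) (Gt ++ [Tree'.node a2 Gc]) :=
      steps_inside Gt [] a2 hc2
    exact steps_trans s2 s1
  by_cases hab : a1 = a2
  · subst hab
    have := ed_le l1 r1
    simp only [if_pos rfl]
    omega
  · have rel : EditStep (Gt ++ [Tree'.node a1 Gc]) (Gt ++ [Tree'.node a2 Gc]) :=
      EditStep.relabel Gt a1 a2 Gc []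
    have l2 : EditSteps (t1 + c1 + 1) (ts1 ++ [Tree'.node a1 cs1]) (Gt ++ [Tree'.node a2 Gc]) :=
      EditSteps.tail l1 rel
    have := ed_le l2 r1
    simp only [if_neg hab]
    omega

lemma step_concat_cases {ts F' : Forest α} {R : Tree' α} (h : EditStep (ts ++ [R]) F') :
    (∃ ts', EditStep ts ts' ∧ F' = ts' ++ [R]) ∨
    (∃ a cs, R = .node a cs ∧ F' = ts ++ cs) ∨
    (∃ a b cs, R = .node a cs ∧ F' = ts ++ [.node b cs]) ∨
    (∃ a cs cs', R = .node a cs ∧ EditStep cs cs' ∧ F' = ts ++ [.node a cs']) := by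
  generalize hF : ts ++ [R] = F0 at h
  cases h with
  | delete pre a cs post =>
      rcases List.eq_nil_or_concat post with rfl | ⟨post0, R0, rfl⟩
      · obtain ⟨h1, h2⟩ := List.append_inj' hF.symm rfl
        obtain rfl := h1
        obtain rfl : Tree'.node a cs = R := by simpa using h2
        exact Or.inr (Or.inl ⟨a, cs, rfl, by simp⟩)
      · have hF' : (pre ++ Tree'.node a cs :: post0) ++ [R0] = ts ++ [R] := by
          simpa using hF.symm
        obtain ⟨h1, h2⟩ := List.append_inj' hF' rfl
        obtain rfl : R0 = R := by simpa using h2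
        refine Or.inl ⟨pre ++ cs ++ post0, ?_, by simp⟩
        rw [← h1]
        exact EditStep.delete pre a cs post0
  | relabel pre a b cs post =>
      rcases List.eq_nil_or_concat post with rfl | ⟨post0, R0, rfl⟩
      · obtain ⟨h1, h2⟩ := List.append_inj' hF.symm rfl
        obtain rfl := h1
        obtain rfl : Tree'.node a cs = R := by simpa using h2
        exact Or.inr (Or.inr (Or.inl ⟨a, b, cs, rfl, by simp⟩))
      · have hF' : (pre ++ Tree'.node a cs :: post0) ++ [R0] = ts ++ [R] := by
          simpa using hF.symm
        obtain ⟨h1, h2⟩ := List.append_inj' hF' rfl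
        obtain rfl : R0 = R := by simpa using h2
        refine Or.inl ⟨pre ++ Tree'.node b cs :: post0, ?_, by simp⟩
        rw [← h1]
        exact EditStep.relabel pre a b cs post0
  | inside pre a post hcs =>
      rename_i cs cs'
      rcases List.eq_nil_or_concat post with rfl | ⟨post0, R0, rfl⟩
      · obtain ⟨h1, h2⟩ := List.append_inj' hF.symm rfl
        obtain rfl := h1
        obtain rfl : Tree'.node a cs = R := by simpa using h2
        exact Or.inr (Or.inr (Or.inr ⟨a, cs, cs', rfl, hcs, by simp⟩))
      · have hF' : (pre ++ Tree'.node a cs :: post0) ++ [R0] = ts ++ [R] := by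
          simpa using hF.symm
        obtain ⟨h1, h2⟩ := List.append_inj' hF' rfl
        obtain rfl : R0 = R := by simpa using h2
        refine Or.inl ⟨pre ++ Tree'.node a cs' :: post0, ?_, by simp⟩
        rw [← h1]
        exact EditStep.inside pre a post0 hcs

lemma D_lipschitz [DecidableEq α] :
    ∀ n : ℕ, ∀ F F' G : Forest α, EditStep F F' →
      Forest.size F + Forest.size G ≤ n → D F G ≤ D F' G + 1 := by
  intro n
  induction n with
  | zero =>
      intro F F' G h hn
      exfalso
      cases h <;> (simp only [size_append, size_cons, size_node, size_nil] at hn; omega)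
  | succ n ih =>
      intro F F' G h hn
      rcases List.eq_nil_or_concat G with rfl | ⟨ts2, T2, rfl⟩
      · rw [D_nil_right, D_nil_right]
        exact (step_size h).2
      · obtain ⟨b, ds⟩ := T2
        rcases List.eq_nil_or_concat F with hF | ⟨ts, R, rfl⟩
        · exact absurd hF (step_src_ne_nil h)
        simp only [List.concat_eq_append] at h hn ⊢
        rcases step_concat_cases h with ⟨ts', hstep, rfl⟩ | ⟨a, cs, rfl, rfl⟩ |
          ⟨a, b', cs, rfl, rfl⟩ | ⟨a, cs, cs', rfl, hcs, rfl⟩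
        · -- step inside ts
          obtain ⟨r, rcs⟩ := R
          rw [D_rec, D_rec]
          have hA : D (ts ++ rcs) (ts2 ++ [Tree'.node b ds]) ≤
              D (ts' ++ rcs) (ts2 ++ [Tree'.node b ds]) + 1 := by
            refine ih _ _ _ (by simpa using step_context [] rcs hstep) ?_
            simp only [size_append, size_cons, size_node, size_nil] at hn ⊢; omega
          have hB : D (ts ++ [Tree'.node r rcs]) (ts2 ++ ds) ≤
              D (ts' ++ [Tree'.node r rcs]) (ts2 ++ ds) + 1 := by
            refine ih _ _ _ h ?_
            simp only [size_append, size_cons, size_node, size_nil] at hn ⊢; omega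
          have hC : D ts ts2 ≤ D ts' ts2 + 1 := by
            refine ih _ _ _ hstep ?_
            simp only [size_append, size_cons, size_node, size_nil] at hn ⊢; omega
          omega
        · -- delete rightmost root
          rw [D_rec]
          omega
        · -- relabel rightmost root
          rw [D_rec, D_rec]
          have hB : D (ts ++ [Tree'.node a cs]) (ts2 ++ ds) ≤
              D (ts ++ [Tree'.node b' cs]) (ts2 ++ ds) + 1 := by
            refine ih _ _ _ h ?_
            simp only [size_append, size_cons, size_node, size_nil] at hn ⊢; omega
          have hd : (if a = b then (0:ℕ) else 1) ≤ (if b' = b then (0:ℕ) else 1) + 1 := by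
            by_cases hab : a = b <;> by_cases hb : b' = b <;> simp [hab, hb]
          omega
        · -- step inside rightmost tree
          rw [D_rec, D_rec]
          have hA : D (ts ++ cs) (ts2 ++ [Tree'.node b ds]) ≤
              D (ts ++ cs') (ts2 ++ [Tree'.node b ds]) + 1 := by
            refine ih _ _ _ (by simpa using step_context ts [] hcs) ?_
            have := (step_size hcs).1
            simp only [size_append, size_cons, size_node, size_nil] at hn ⊢; omega
          have hB : D (ts ++ [Tree'.node a cs]) (ts2 ++ ds) ≤
              D (ts ++ [Tree'.node a cs']) (ts2 ++ ds) + 1 := by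
            refine ih _ _ _ h ?_
            simp only [size_append, size_cons, size_node, size_nil] at hn ⊢; omega
          have hC : D cs ds ≤ D cs' ds + 1 := by
            refine ih _ _ _ hcs ?_
            simp only [size_append, size_cons, size_node, size_nil] at hn ⊢; omega
          omega

lemma D_self [DecidableEq α] : ∀ n : ℕ, ∀ G : Forest α, Forest.size G ≤ n → D G G = 0 := by
  intro n
  induction n with
  | zero =>
      intro G hn
      rcases List.eq_nil_or_concat G with rfl | ⟨ts, R, rfl⟩
      · rw [D_nil_right]; rfl
      · exfalso
        obtain ⟨a, cs⟩ := R
        simp only [List.concat_eq_append, size_append, size_cons, size_node, size_nil] at hn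
        omega
  | succ n ih =>
      intro G hn
      rcases List.eq_nil_or_concat G with rfl | ⟨ts, R, rfl⟩
      · rw [D_nil_right]; rfl
      · obtain ⟨a, cs⟩ := R
        simp only [List.concat_eq_append] at hn ⊢
        simp only [size_append, size_cons, size_node, size_nil] at hn
        rw [D_rec, ih ts (by omega), ih cs (by omega)]
        simp

lemma D_symm [DecidableEq α] :
    ∀ n : ℕ, ∀ F G : Forest α, Forest.size F + Forest.size G ≤ n → D F G = D G F := by
  intro n
  induction n with
  | zero =>
      intro F G hn
      rcases List.eq_nil_or_concat F with rfl | ⟨ts1, R1, rfl⟩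
      · rw [D_nil_left, D_nil_right]
      · exfalso
        obtain ⟨a, cs⟩ := R1
        simp only [List.concat_eq_append, size_append, size_cons, size_node, size_nil] at hn
        omega
  | succ n ih =>
      intro F G hn
      rcases List.eq_nil_or_concat F with rfl | ⟨ts1, R1, rfl⟩
      · rw [D_nil_left, D_nil_right]
      · rcases List.eq_nil_or_concat G with rfl | ⟨ts2, R2, rfl⟩
        · rw [D_nil_left, D_nil_right]
        · obtain ⟨a, cs⟩ := R1
          obtain ⟨b, ds⟩ := R2
          simp only [List.concat_eq_append] at hn ⊢
          simp only [size_append, size_cons, size_node, size_nil] at hn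
          rw [D_rec, D_rec]
          rw [ih (ts1 ++ cs) (ts2 ++ [Tree'.node b ds])
              (by simp only [size_append, size_cons, size_node, size_nil]; omega),
            ih (ts1 ++ [Tree'.node a cs]) (ts2 ++ ds)
              (by simp only [size_append, size_cons, size_node, size_nil]; omega),
            ih cs ds (by omega), ih ts1 ts2 (by omega)]
          have hd : (if a = b then (0:ℕ) else 1) = (if b = a then (0:ℕ) else 1) := by
            by_cases hab : a = b
            · simp [hab]
            · simp [hab, Ne.symm hab]
          rw [hd]
          omega

lemma D_le_steps_left [DecidableEq α] {k : ℕ} {F H : Forest α} (h : EditSteps k F H)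
    (G : Forest α) : D F G ≤ D H G + k := by
  induction h with
  | refl => simp
  | tail hs st ih =>
      have := D_lipschitz (Forest.size _ + Forest.size G) _ _ G st le_rfl
      omega

lemma D_le_ed [DecidableEq α] (F G : Forest α) : D F G ≤ ed F G := by
  obtain ⟨k1, k2, G', hk, h1, h2⟩ := ed_spec F G
  have hL : D F G ≤ D G' G + k1 := D_le_steps_left h1 G
  have hsym : D G' G = D G G' := D_symm (Forest.size G' + Forest.size G) G' G le_rfl
  have hR : D G G' ≤ D G' G' + k2 := D_le_steps_left h2 G'
  have h0 : D G' G' = 0 := D_self (Forest.size G') G' le_rfl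
  omega

lemma ed_le_D_aux [DecidableEq α] :
    ∀ n : ℕ, ∀ F G : Forest α, Forest.size F + Forest.size G ≤ n → ed F G ≤ D F G := by
  intro n
  induction n with
  | zero =>
      intro F G hn
      rcases List.eq_nil_or_concat F with rfl | ⟨ts1, R1, rfl⟩
      · rw [D_nil_left]
        have := ed_le (.refl ([] : Forest α)) (deleteAll G)
        simpa using this
      · exfalso
        obtain ⟨a, cs⟩ := R1
        simp only [List.concat_eq_append, size_append, size_cons, size_node, size_nil] at hn
        omega
  | succ n ih =>
      intro F G hn
      rcases List.eq_nil_or_concat F with rfl | ⟨ts1, R1, rfl⟩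
      · rw [D_nil_left]
        have := ed_le (.refl ([] : Forest α)) (deleteAll G)
        simpa using this
      · rcases List.eq_nil_or_concat G with rfl | ⟨ts2, R2, rfl⟩
        · rw [D_nil_right]
          have := ed_le (deleteAll (ts1.concat R1)) (.refl ([] : Forest α))
          simpa using this
        · obtain ⟨a1, cs1⟩ := R1
          obtain ⟨a2, cs2⟩ := R2
          simp only [List.concat_eq_append] at hn ⊢
          simp only [size_append, size_cons, size_node, size_nil] at hn
          rw [D_rec]
          refine le_min (le_min ?_ ?_) ?_
          · have hstep : EditStep (ts1 ++ [Tree'.node a1 cs1]) (ts1 ++ cs1) := by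
              simpa using EditStep.delete ts1 a1 cs1 []
            have h1 := ed_step_left (G := ts2 ++ [Tree'.node a2 cs2]) hstep
            have h2 := ih (ts1 ++ cs1) (ts2 ++ [Tree'.node a2 cs2])
              (by simp only [size_append, size_cons, size_node, size_nil]; omega)
            omega
          · have hstep : EditStep (ts2 ++ [Tree'.node a2 cs2]) (ts2 ++ cs2) := by
              simpa using EditStep.delete ts2 a2 cs2 []
            have h1 := ed_step_left (G := ts1 ++ [Tree'.node a1 cs1]) hstep
            have h2 := ih (ts1 ++ [Tree'.node a1 cs1]) (ts2 ++ cs2)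
              (by simp only [size_append, size_cons, size_node, size_nil]; omega)
            have e1 := ed_symm (ts1 ++ [Tree'.node a1 cs1]) (ts2 ++ [Tree'.node a2 cs2])
            have e2 := ed_symm (ts2 ++ cs2) (ts1 ++ [Tree'.node a1 cs1])
            omega
          · have h1 := ed_compose ts1 ts2 cs1 cs2 a1 a2
            have h2 := ih cs1 cs2 (by omega)
            have h3 := ih ts1 ts2 (by omega)
            omega

theorem ed_eq_D [DecidableEq α] (F G : Forest α) : ed F G = D F G :=
  le_antisymm (ed_le_D_aux (Forest.size F + Forest.size G) F G le_rfl) (D_le_ed F G)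

end ZS

/-- The Zhang–Shasha recurrence for tree edit distance: `ed(F, ∅) = |F|`, and for
nonempty forests `F1 = ts1 + a1(cs1)` and `F2 = ts2 + a2(cs2)` (rightmost roots `a1(cs1)`
and `a2(cs2)`),
`ed(F1, F2) = min( ed(F1 - r_{F1}, F2) + 1, ed(F1, F2 - r_{F2}) + 1,
ed(R°_{F1}, R°_{F2}) + ed(L'_{F1}, L'_{F2}) + δ(r_{F1}, r_{F2}) )`. -/
theorem zhang_shasha_recurrence {α : Type} [DecidableEq α] :
    (∀ F : Forest α, ed F ([] : Forest α) = Forest.size F) ∧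
    ∀ (ts1 ts2 cs1 cs2 : Forest α) (a1 a2 : α),
      ed (ts1 ++ [Tree'.node a1 cs1]) (ts2 ++ [Tree'.node a2 cs2]) =
        min (min (ed (ts1 ++ cs1) (ts2 ++ [Tree'.node a2 cs2]) + 1)
                 (ed (ts1 ++ [Tree'.node a1 cs1]) (ts2 ++ cs2) + 1))
            (ed cs1 cs2 + ed ts1 ts2 + (if a1 = a2 then 0 else 1)) := by
  constructor
  · intro F
    rw [ZS.ed_eq_D, ZS.D_nil_right]
  · intro ts1 ts2 cs1 cs2 a1 a2
    rw [ZS.ed_eq_D, ZS.ed_eq_D, ZS.ed_eq_D, ZS.ed_eq_D, ZS.ed_eq_D, ZS.D_rec]
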